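/- Let e ≥ 1 and ℓ ≥ 1 be natural numbers with 2ℓ < 2^(e-1). Then the rational number T = C(2^e+4ℓ+1, 2ℓ)⁻¹ − C(4ℓ+1, 2ℓ)⁻¹ is nonzero and ν(T) = e − α(ℓ) − lg(ℓ) − 2. -/

import Mathlib

open Finset

private lemma count_one_eq_sum : ∀ (L : List ℕ), (∀ x ∈ L, x < 2) → L.count 1 = L.sum
  | [], _ => by simp
  | a :: t, h => by
    have ha : a < 2 := h a (by simp)
    have ih := count_one_eq_sum t (fun x hx => h x (by simp [hx]))
    interval_cases a <;> simp [List.count_cons, ih] <;> omega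

private lemma sum_digits_two_mul (n : ℕ) (hn : n ≠ 0) :
    (Nat.digits 2 (2 * n)).sum = (Nat.digits 2 n).sum := by
  rw [Nat.digits_def' (by norm_num : 1 < 2) (by omega : 0 < 2 * n)]
  simp

private lemma sum_digits_two_mul_add_one (n : ℕ) :
    (Nat.digits 2 (2 * n + 1)).sum = (Nat.digits 2 n).sum + 1 := by
  rw [Nat.digits_def' (by norm_num : 1 < 2) (by omega : 0 < 2 * n + 1)]
  simp [Nat.mul_add_mod, Nat.mul_add_div]
  omega

private lemma val_factorial (n : ℕ) :
    padicValNat 2 (Nat.factorial n) + (Nat.digits 2 n).sum = n := by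
  have h := sub_one_mul_padicValNat_factorial (p := 2) n
  have h2 := Nat.digit_sum_le 2 n
  omega

private lemma val_eq_of_dvd_not_dvd {a w : ℕ} (ha : a ≠ 0) (h1 : 2 ^ w ∣ a)
    (h2 : ¬ 2 ^ (w + 1) ∣ a) : padicValNat 2 a = w := by
  have l1 := (padicValNat_dvd_iff_le (p := 2) ha).mp h1
  have l2 : ¬ (w + 1 ≤ padicValNat 2 a) := fun hc => h2 ((padicValNat_dvd_iff_le ha).mpr hc)
  omega

private lemma val_two_pow_add {e j : ℕ} (hj : 0 < j) (hv : padicValNat 2 j < e) :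
    padicValNat 2 (2 ^ e + j) = padicValNat 2 j := by
  have h1 : (2:ℕ) ^ padicValNat 2 j ∣ j := pow_padicValNat_dvd
  have h2 : ¬ (2:ℕ) ^ (padicValNat 2 j + 1) ∣ j := pow_succ_padicValNat_not_dvd hj.ne'
  refine val_eq_of_dvd_not_dvd (by positivity) (dvd_add (pow_dvd_pow 2 hv.le) h1) ?_
  intro hdd
  exact h2 (by simpa using Nat.dvd_sub hdd (pow_dvd_pow 2 hv))

private lemma padicValNat_prod {s : Finset ℕ} {f : ℕ → ℕ} (hf : ∀ i ∈ s, f i ≠ 0) :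
    padicValNat 2 (∏ i ∈ s, f i) = ∑ i ∈ s, padicValNat 2 (f i) := by
  classical
  induction s using Finset.induction with
  | empty => simp
  | @insert a s' hx ih =>
    rw [Finset.prod_insert hx, Finset.sum_insert hx,
      padicValNat.mul (hf a (by simp)) (Finset.prod_ne_zero_iff.mpr fun i hi => hf i (by simp [hi])),
      ih (fun i hi => hf i (by simp [hi]))]

theorem stmt_11 (e ℓ : ℕ) (he : 1 ≤ e) (hℓ : 1 ≤ ℓ) (h : 2 * ℓ < 2 ^ (e - 1)) :
    ((((2 ^ e + 4 * ℓ + 1).choose (2 * ℓ) : ℚ))⁻¹ - (((4 * ℓ + 1).choose (2 * ℓ) : ℚ))⁻¹) ≠ 0 ∧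
      padicValRat 2
          ((((2 ^ e + 4 * ℓ + 1).choose (2 * ℓ) : ℚ))⁻¹ - (((4 * ℓ + 1).choose (2 * ℓ) : ℚ))⁻¹) =
        (e : ℤ) - ((Nat.digits 2 ℓ).count 1 : ℤ) - (Nat.log 2 ℓ : ℤ) - 2 := by
  classical
  set L := Nat.log 2 ℓ with hLdef
  set m := L + 2 with hmdef
  have hL1 : 2 ^ L ≤ ℓ := Nat.pow_log_le_self 2 (by omega)
  have hL2 : ℓ < 2 ^ (L + 1) := Nat.lt_pow_succ_log_self (by norm_num) ℓ
  have hL2' : ℓ < 2 ^ L * 2 := by rw [← pow_succ]; exact hL2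
  -- m < e
  have hme : ∃ d, e = m + d + 1 := by
    have h1 : 2 ^ (L + 1) ≤ 2 * ℓ := by rw [pow_succ]; omega
    have h2 : L + 1 < e - 1 :=
      (Nat.pow_lt_pow_iff_right (by norm_num : 1 < 2)).mp (lt_of_le_of_lt h1 h)
    exact ⟨e - m - 1, by omega⟩
  obtain ⟨d, hd⟩ := hme
  -- powers of two facts
  have hpm : (2:ℕ) ^ m = 2 ^ L * 4 := by rw [hmdef, pow_add]; norm_num
  have hpm1 : (2:ℕ) ^ (m + 1) = 2 ^ L * 8 := by
    rw [hmdef, show L + 2 + 1 = L + 3 from rfl, pow_add]; norm_num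
  set s := Finset.Ico (2 * ℓ + 2) (4 * ℓ + 2) with hsdef
  have hj₀mem : 2 ^ m ∈ s := by
    rw [hsdef, Finset.mem_Ico]; omega
  have hjpos : ∀ j ∈ s, 0 < j := by
    intro j hj; rw [hsdef, Finset.mem_Ico] at hj; omega
  have hjval_le : ∀ j ∈ s, padicValNat 2 j ≤ m := by
    intro j hj
    have hdvd : (2:ℕ) ^ padicValNat 2 j ∣ j := pow_padicValNat_dvd
    have hle := Nat.le_of_dvd (hjpos j hj) hdvd
    by_contra hc
    have h2 : (2:ℕ) ^ (m + 1) ≤ 2 ^ padicValNat 2 j :=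
      Nat.pow_le_pow_right (by norm_num) (by omega)
    rw [hsdef, Finset.mem_Ico] at hj
    omega
  have hjne : ∀ j ∈ s, j ≠ 2 ^ m → padicValNat 2 j < m := by
    intro j hj hne
    by_contra hc
    have hdvd : (2:ℕ) ^ m ∣ j :=
      dvd_trans (pow_dvd_pow 2 (by omega : m ≤ padicValNat 2 j)) pow_padicValNat_dvd
    obtain ⟨c, hc2⟩ := hdvd
    rw [hsdef, Finset.mem_Ico] at hj
    rcases (by omega : c = 0 ∨ c = 1 ∨ 2 ≤ c) with h0 | h1 | h2
    · rw [h0, mul_zero] at hc2; omega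
    · exact hne (by rw [hc2, h1, mul_one])
    · have h3 : 2 ^ L * 8 ≤ j := by
        calc 2 ^ L * 8 = 2 ^ L * 4 * 2 := by ring
          _ = 2 ^ m * 2 := by rw [hpm]
          _ ≤ 2 ^ m * c := Nat.mul_le_mul_left _ h2
          _ = j := hc2.symm
      omega
  set P1 := ∏ j ∈ s, j with hP1def
  set P2 := ∏ j ∈ s, (2 ^ e + j) with hP2def
  have hP1ne : P1 ≠ 0 := by
    rw [hP1def]
    exact Finset.prod_ne_zero_iff.mpr fun j hj => (hjpos j hj).ne'
  have hP2ne : P2 ≠ 0 := by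
    rw [hP2def]
    exact Finset.prod_ne_zero_iff.mpr fun j hj => by positivity
  -- factorial identity for P1
  have hfact1 : Nat.factorial (2 * ℓ + 1) * P1 = Nat.factorial (4 * ℓ + 1) := by
    rw [hP1def, hsdef, ← Finset.prod_Ico_id_eq_factorial, ← Finset.prod_Ico_id_eq_factorial]
    rw [show 2 * ℓ + 1 + 1 = 2 * ℓ + 2 from rfl, show 4 * ℓ + 1 + 1 = 4 * ℓ + 2 from rfl]
    exact Finset.prod_Ico_consecutive _ (by omega) (by omega)
  -- digit sums / Legendre
  have hd1 : (Nat.digits 2 (2 * ℓ)).sum = (Nat.digits 2 ℓ).sum :=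
    sum_digits_two_mul ℓ (by omega)
  have hd2 : (Nat.digits 2 (2 * ℓ + 1)).sum = (Nat.digits 2 ℓ).sum + 1 :=
    sum_digits_two_mul_add_one ℓ
  have hd3 : (Nat.digits 2 (4 * ℓ + 1)).sum = (Nat.digits 2 ℓ).sum + 1 := by
    have h1 := sum_digits_two_mul_add_one (2 * ℓ)
    rw [show 2 * (2 * ℓ) + 1 = 4 * ℓ + 1 by ring] at h1
    omega
  have hf1 := val_factorial (2 * ℓ + 1)
  have hf2 := val_factorial (4 * ℓ + 1)
  have hf3 := val_factorial (2 * ℓ)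
  have hVaux : padicValNat 2 (Nat.factorial (2 * ℓ + 1)) + padicValNat 2 P1
      = padicValNat 2 (Nat.factorial (4 * ℓ + 1)) := by
    rw [← padicValNat.mul (Nat.factorial_ne_zero _) hP1ne, hfact1]
  have hV : padicValNat 2 P1 = 2 * ℓ := by omega
  have hP2v : padicValNat 2 P2 = 2 * ℓ := by
    rw [hP2def, padicValNat_prod (fun j hj => by positivity)]
    rw [show (2:ℕ) * ℓ = padicValNat 2 P1 from hV.symm, hP1def,
      padicValNat_prod (fun j hj => (hjpos j hj).ne')]
    exact Finset.sum_congr rfl fun j hj =>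
      val_two_pow_add (hjpos j hj) (by have := hjval_le j hj; omega)
  have hpe : 0 < 2 ^ e := Nat.pow_pos (by norm_num)
  -- factorial identity for P2
  have hfact2 : Nat.factorial (2 ^ e + 2 * ℓ + 1) * P2 = Nat.factorial (2 ^ e + 4 * ℓ + 1) := by
    have hshift : P2 = ∏ x ∈ Finset.Ico (2 * ℓ + 2 + 2 ^ e) (4 * ℓ + 2 + 2 ^ e), x := by
      rw [hP2def, hsdef, ← Finset.prod_Ico_add (fun x => x) (2 * ℓ + 2) (4 * ℓ + 2) (2 ^ e)]
    rw [hshift, ← Finset.prod_Ico_id_eq_factorial, ← Finset.prod_Ico_id_eq_factorial,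
      show 2 ^ e + 2 * ℓ + 1 + 1 = 2 * ℓ + 2 + 2 ^ e by omega,
      show 2 ^ e + 4 * ℓ + 1 + 1 = 4 * ℓ + 2 + 2 ^ e by omega]
    exact Finset.prod_Ico_consecutive _ (by omega) (by omega)
  -- binomials
  have hBne : (4 * ℓ + 1).choose (2 * ℓ) ≠ 0 := (Nat.choose_pos (by omega)).ne'
  have hAne : (2 ^ e + 4 * ℓ + 1).choose (2 * ℓ) ≠ 0 := (Nat.choose_pos (by omega)).ne'
  have hchooseB : (4 * ℓ + 1).choose (2 * ℓ) * Nat.factorial (2 * ℓ) = P1 := by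
    have h1 := Nat.choose_mul_factorial_mul_factorial (show 2 * ℓ ≤ 4 * ℓ + 1 by omega)
    rw [show 4 * ℓ + 1 - 2 * ℓ = 2 * ℓ + 1 by omega] at h1
    apply Nat.eq_of_mul_eq_mul_right (Nat.factorial_pos (2 * ℓ + 1))
    rw [h1, ← hfact1, mul_comm]
  have hchooseA : (2 ^ e + 4 * ℓ + 1).choose (2 * ℓ) * Nat.factorial (2 * ℓ) = P2 := by
    have h1 := Nat.choose_mul_factorial_mul_factorial (show 2 * ℓ ≤ 2 ^ e + 4 * ℓ + 1 by omega)
    rw [show 2 ^ e + 4 * ℓ + 1 - 2 * ℓ = 2 ^ e + 2 * ℓ + 1 by omega] at h1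
    apply Nat.eq_of_mul_eq_mul_right (Nat.factorial_pos (2 ^ e + 2 * ℓ + 1))
    rw [h1, ← hfact2, mul_comm]
  have hvB : padicValNat 2 ((4 * ℓ + 1).choose (2 * ℓ)) + padicValNat 2 (Nat.factorial (2 * ℓ))
      = 2 * ℓ := by
    rw [← padicValNat.mul hBne (Nat.factorial_ne_zero _), hchooseB, hV]
  have hvA : padicValNat 2 ((2 ^ e + 4 * ℓ + 1).choose (2 * ℓ))
      + padicValNat 2 (Nat.factorial (2 * ℓ)) = 2 * ℓ := by
    rw [← padicValNat.mul hAne (Nat.factorial_ne_zero _), hchooseA, hP2v]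
  -- decomposition of P2 via prod_add
  set F : Finset ℕ → ℕ := fun t => 2 ^ (e * t.card) * ∏ j ∈ s \ t, j with hFdef
  have hdecomp : P2 = ∑ t ∈ s.powerset, F t := by
    rw [hP2def, Finset.prod_add]
    refine Finset.sum_congr rfl fun t ht => ?_
    simp only [hFdef]
    rw [Finset.prod_const, ← pow_mul]
  have hFpos : ∀ t, 0 < F t := by
    intro t
    rw [hFdef]
    exact Nat.mul_pos (Nat.pow_pos (by norm_num))
      (Finset.prod_pos fun j hj => hjpos j (Finset.mem_sdiff.mp hj).1)
  have hFval : ∀ t ∈ s.powerset, padicValNat 2 (F t) + ∑ j ∈ t, padicValNat 2 j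
      = e * t.card + 2 * ℓ := by
    intro t ht
    have hts : t ⊆ s := Finset.mem_powerset.mp ht
    have hsdne : (∏ j ∈ s \ t, j) ≠ 0 :=
      Finset.prod_ne_zero_iff.mpr fun j hj => (hjpos j (Finset.mem_sdiff.mp hj).1).ne'
    have htne : (∏ j ∈ t, j) ≠ 0 :=
      Finset.prod_ne_zero_iff.mpr fun j hj => (hjpos j (hts hj)).ne'
    have h1 : padicValNat 2 (F t) = e * t.card + padicValNat 2 (∏ j ∈ s \ t, j) := by
      rw [hFdef, padicValNat.mul (by positivity) hsdne, padicValNat.prime_pow]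
    have h2 : padicValNat 2 (∏ j ∈ s \ t, j) + padicValNat 2 (∏ j ∈ t, j)
        = padicValNat 2 P1 := by
      rw [← padicValNat.mul hsdne htne, Finset.prod_sdiff hts, hP1def]
    have h3 : padicValNat 2 (∏ j ∈ t, j) = ∑ j ∈ t, padicValNat 2 j :=
      padicValNat_prod fun j hj => (hjpos j (hts hj)).ne'
    omega
  set w := 2 * ℓ + d + 1 with hwdef
  have ht₀mem : {2 ^ m} ∈ s.powerset :=
    Finset.mem_powerset.mpr (Finset.singleton_subset_iff.mpr hj₀mem)
  have hmain : padicValNat 2 (F {2 ^ m}) = w := by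
    have h1 := hFval {2 ^ m} ht₀mem
    rw [Finset.sum_singleton, Finset.card_singleton, padicValNat.prime_pow] at h1
    omega
  have hother : ∀ t ∈ s.powerset, t ≠ ∅ → t ≠ {2 ^ m} → 2 ^ (w + 1) ∣ F t := by
    intro t ht htne hneq
    have hts : t ⊆ s := Finset.mem_powerset.mp ht
    have hval := hFval t ht
    have hcard : 1 ≤ t.card := Finset.card_pos.mpr (Finset.nonempty_of_ne_empty htne)
    rw [padicValNat_dvd_iff_le (hFpos t).ne']
    rcases eq_or_lt_of_le hcard with h1 | h2
    · obtain ⟨j, hj⟩ := Finset.card_eq_one.mp h1.symm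
      subst hj
      have hjs : j ∈ s := hts (by simp)
      have hjne2 : j ≠ 2 ^ m := fun hc => hneq (by rw [hc])
      have hlt := hjne j hjs hjne2
      rw [Finset.sum_singleton, Finset.card_singleton] at hval
      omega
    · set k := t.card with hkdef
      have hsum : ∑ j ∈ t, padicValNat 2 j ≤ k * m := by
        calc ∑ j ∈ t, padicValNat 2 j ≤ k • m :=
              Finset.sum_le_card_nsmul t _ m fun j hj => hjval_le j (hts hj)
          _ = k * m := nsmul_eq_mul k m
      have e1 : e * k = m * k + d * k + k := by rw [hd]; ring
      have e2 : d * 2 ≤ d * k := Nat.mul_le_mul_left d (by omega)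
      have e3 : m * k ≥ m * 2 := Nat.mul_le_mul_left m (by omega)
      have e4 : k * m = m * k := mul_comm k m
      omega
  -- the sum D
  set D := ∑ t ∈ (s.powerset).erase ∅, F t with hDdef
  have hDsum : P2 = P1 + D := by
    rw [hdecomp, ← Finset.add_sum_erase _ F (Finset.empty_mem_powerset s), hDdef]
    congr 1
    rw [hFdef]
    simp
    exact hP1def.symm
  have hw_dvd : ∀ t ∈ (s.powerset).erase ∅, 2 ^ w ∣ F t := by
    intro t ht
    obtain ⟨htne, htp⟩ := Finset.mem_erase.mp ht
    by_cases hcase : t = {2 ^ m}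
    · rw [hcase]
      exact (padicValNat_dvd_iff_le (hFpos _).ne').mpr (le_of_eq hmain.symm)
    · exact dvd_trans (pow_dvd_pow 2 (by omega)) (hother t htp htne hcase)
  have hDdvd : 2 ^ w ∣ D := Finset.dvd_sum hw_dvd
  have ht₀mem' : {2 ^ m} ∈ (s.powerset).erase ∅ :=
    Finset.mem_erase.mpr ⟨Finset.singleton_ne_empty _, ht₀mem⟩
  have hDsplit : D = F {2 ^ m} + ∑ t ∈ ((s.powerset).erase ∅).erase {2 ^ m}, F t :=
    (Finset.add_sum_erase _ F ht₀mem').symm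
  have hrest : 2 ^ (w + 1) ∣ ∑ t ∈ ((s.powerset).erase ∅).erase {2 ^ m}, F t := by
    refine Finset.dvd_sum fun t ht => ?_
    obtain ⟨hne1, ht2⟩ := Finset.mem_erase.mp ht
    obtain ⟨hne2, ht3⟩ := Finset.mem_erase.mp ht2
    exact hother t ht3 hne2 hne1
  have hDnot : ¬ 2 ^ (w + 1) ∣ D := by
    intro hc
    have hdd : 2 ^ (w + 1) ∣ F {2 ^ m} := by
      have heq : F {2 ^ m} = D - ∑ t ∈ ((s.powerset).erase ∅).erase {2 ^ m}, F t := by omega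
      rw [heq]
      exact Nat.dvd_sub hc hrest
    have := pow_succ_padicValNat_not_dvd (p := 2) (hFpos {2 ^ m}).ne'
    rw [hmain] at this
    exact this hdd
  have hDne : D ≠ 0 := fun h0 => hDnot (h0 ▸ dvd_zero _)
  have hDval : padicValNat 2 D = w := val_eq_of_dvd_not_dvd hDne hDdvd hDnot
  -- rational endgame
  have hcount : (Nat.digits 2 ℓ).count 1 = (Nat.digits 2 ℓ).sum :=
    count_one_eq_sum _ fun x hx => Nat.digits_lt_base (by norm_num) hx
  have hA0 : (((2 ^ e + 4 * ℓ + 1).choose (2 * ℓ) : ℚ)) ≠ 0 := Nat.cast_ne_zero.mpr hAne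
  have hB0 : (((4 * ℓ + 1).choose (2 * ℓ) : ℚ)) ≠ 0 := Nat.cast_ne_zero.mpr hBne
  have hfac0 : ((Nat.factorial (2 * ℓ) : ℚ)) ≠ 0 := Nat.cast_ne_zero.mpr (Nat.factorial_ne_zero _)
  have hD0 : ((D : ℚ)) ≠ 0 := Nat.cast_ne_zero.mpr hDne
  have hden0 : ((Nat.factorial (2 * ℓ) : ℚ)) * (((2 ^ e + 4 * ℓ + 1).choose (2 * ℓ) : ℚ))
      * (((4 * ℓ + 1).choose (2 * ℓ) : ℚ)) ≠ 0 :=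
    mul_ne_zero (mul_ne_zero hfac0 hA0) hB0
  have c1 : (((2 ^ e + 4 * ℓ + 1).choose (2 * ℓ) : ℚ)) * ((Nat.factorial (2 * ℓ) : ℚ))
      = (P1 : ℚ) + (D : ℚ) := by
    have h0 : (2 ^ e + 4 * ℓ + 1).choose (2 * ℓ) * Nat.factorial (2 * ℓ) = P1 + D :=
      hchooseA.trans hDsum
    exact_mod_cast congrArg (Nat.cast : ℕ → ℚ) h0
  have c2 : (((4 * ℓ + 1).choose (2 * ℓ) : ℚ)) * ((Nat.factorial (2 * ℓ) : ℚ)) = (P1 : ℚ) :=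
    by exact_mod_cast congrArg (Nat.cast : ℕ → ℚ) hchooseB
  have hTeq : (((2 ^ e + 4 * ℓ + 1).choose (2 * ℓ) : ℚ))⁻¹ - (((4 * ℓ + 1).choose (2 * ℓ) : ℚ))⁻¹
      = -(D : ℚ) / ((Nat.factorial (2 * ℓ) : ℚ) * (((2 ^ e + 4 * ℓ + 1).choose (2 * ℓ) : ℚ))
        * (((4 * ℓ + 1).choose (2 * ℓ) : ℚ))) := by
    rw [inv_sub_inv hA0 hB0, div_eq_div_iff (mul_ne_zero hA0 hB0) hden0]
    linear_combination ((((2 ^ e + 4 * ℓ + 1).choose (2 * ℓ) : ℚ))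
        * (((4 * ℓ + 1).choose (2 * ℓ) : ℚ))) * c2
      - ((((2 ^ e + 4 * ℓ + 1).choose (2 * ℓ) : ℚ))
        * (((4 * ℓ + 1).choose (2 * ℓ) : ℚ))) * c1
  constructor
  · rw [hTeq]
    exact div_ne_zero (neg_ne_zero.mpr hD0) hden0
  · rw [hTeq, padicValRat.div (p := 2) (neg_ne_zero.mpr hD0) hden0, padicValRat.neg,
      padicValRat.mul (p := 2) (mul_ne_zero hfac0 hA0) hB0,
      padicValRat.mul (p := 2) hfac0 hA0,
      padicValRat.of_nat, padicValRat.of_nat, padicValRat.of_nat, padicValRat.of_nat]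
    omega
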